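/- arXiv:2001.00375 — 2 statements merged into one kernel-verified Lean document; each statement's English description precedes it below -/
import Mathlib

section
/- Let k be a differential field of characteristic 0 with m commuting derivations, and let B = k{x_1,...,x_n} be the algebra of differential polynomials, i.e. the polynomial algebra k[X^Θ] on the symbols x_i^θ where Θ is the free commutative monoid on the derivation operators δ_1,...,δ_m, with derivations extended by δ_i(x_j^θ) = x_j^{θδ_i}. Then every element f of B not belonging to k is differentially transcendental over k; that is, there is no nonzero differential polynomial g ∈ k{z} in one variable with g(f) = 0. Equivalently, the family of all derivatives f^θ, θ ∈ Θ, is algebraically independent over k. -/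
open MvPolynomial

/-- The free commutative monoid of derivative operators on `m` derivations. -/
abbrev DOp (m : ℕ) := Fin m →₀ ℕ

/-- The differential polynomial algebra `k{x_1,…,x_n}` with `m` commuting derivations:
the polynomial algebra on the variables `x_i^θ`. -/
abbrev DiffPoly (k : Type) [CommRing k] (n m : ℕ) := MvPolynomial (Fin n × DOp m) k

/-- The `i`-th derivation `δ_i` of `k{x_1,…,x_n}`, with `δ_i (x_j^θ) = x_j^{θ δ_i}`. -/
noncomputable def der (k : Type) [CommRing k] (n m : ℕ) (i : Fin m) :
    Derivation k (DiffPoly k n m) (DiffPoly k n m) :=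
  MvPolynomial.mkDerivation k fun p => X (p.1, p.2 + Finsupp.single i 1)

/-- Application of a derivative operator `θ = δ_1^{i_1} ⋯ δ_m^{i_m}`. -/
noncomputable def applyOp {k : Type} [CommRing k] {n m : ℕ} (θ : DOp m)
    (f : DiffPoly k n m) : DiffPoly k n m :=
  Fin.foldr m (fun i g => (⇑(der k n m i))^[θ i] g) f

/-- The differential subalgebra generated by a set: the smallest subalgebra containing it
and closed under all the derivations. -/
noncomputable def diffAdjoin (k : Type) [CommRing k] {n m : ℕ} (S : Set (DiffPoly k n m)) :
    Subalgebra k (DiffPoly k n m) :=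
  sInf {T | S ⊆ T ∧ ∀ i : Fin m, ∀ x ∈ T, der k n m i x ∈ T}

/-- The weight of the variable `x_j^θ`: `1 + |θ|`. -/
def dwt (n m : ℕ) : Fin n × DOp m → ℕ := fun p => 1 + p.2.sum fun _ v => v

/-- The degree of a differential polynomial. -/
noncomputable def ddeg {k : Type} [CommRing k] {n m : ℕ} (f : DiffPoly k n m) : ℕ :=
  weightedTotalDegree (dwt n m) f

/-- The highest homogeneous part of a differential polynomial. -/
noncomputable def dtop {k : Type} [CommRing k] {n m : ℕ} (f : DiffPoly k n m) :
    DiffPoly k n m :=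
  weightedHomogeneousComponent (dwt n m) (ddeg f) f

/-- The variable `x` of `k{x,y}`. -/
noncomputable def xx (k : Type) [CommRing k] (m : ℕ) : DiffPoly k 2 m := X (0, 0)

/-- The variable `y` of `k{x,y}`. -/
noncomputable def yy (k : Type) [CommRing k] (m : ℕ) : DiffPoly k 2 m := X (1, 0)

/-- A differential automorphism: an algebra automorphism commuting with all derivations. -/
def IsDiffAut {k : Type} [CommRing k] {m : ℕ}
    (φ : DiffPoly k 2 m ≃ₐ[k] DiffPoly k 2 m) : Prop :=
  ∀ i x, φ (der k 2 m i x) = der k 2 m i (φ x)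

/-- An elementary automorphism: of the form `(a x + f(y), y)` or `(x, b y + g(x))`. -/
def IsElementary {k : Type} [CommRing k] {m : ℕ}
    (φ : DiffPoly k 2 m ≃ₐ[k] DiffPoly k 2 m) : Prop :=
  IsDiffAut φ ∧
    ((∃ a : k, a ≠ 0 ∧ ∃ f ∈ diffAdjoin k {yy k m},
        φ (xx k m) = C a * xx k m + f ∧ φ (yy k m) = yy k m) ∨
     (∃ b : k, b ≠ 0 ∧ ∃ g ∈ diffAdjoin k {xx k m},
        φ (yy k m) = C b * yy k m + g ∧ φ (xx k m) = xx k m))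

/-- A tame automorphism: a composition of elementary automorphisms. -/
def IsTame {k : Type} [CommRing k] {m : ℕ}
    (φ : DiffPoly k 2 m ≃ₐ[k] DiffPoly k 2 m) : Prop :=
  φ ∈ Subgroup.closure {ψ | IsElementary ψ}

/-- An affine automorphism `(a₁x + b₁y + c₁, a₂x + b₂y + c₂)`. -/
def IsAffine {k : Type} [CommRing k] {m : ℕ}
    (φ : DiffPoly k 2 m ≃ₐ[k] DiffPoly k 2 m) : Prop :=
  IsDiffAut φ ∧ ∃ a₁ b₁ c₁ a₂ b₂ c₂ : k, a₁ * b₂ ≠ a₂ * b₁ ∧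
    φ (xx k m) = C a₁ * xx k m + C b₁ * yy k m + C c₁ ∧
    φ (yy k m) = C a₂ * xx k m + C b₂ * yy k m + C c₂

/-- A triangular automorphism `(a x + f(y), b y + c)`. -/
def IsTriangular {k : Type} [CommRing k] {m : ℕ}
    (φ : DiffPoly k 2 m ≃ₐ[k] DiffPoly k 2 m) : Prop :=
  IsDiffAut φ ∧ ∃ a b c : k, a ≠ 0 ∧ b ≠ 0 ∧ ∃ f ∈ diffAdjoin k {yy k m},
    φ (xx k m) = C a * xx k m + f ∧ φ (yy k m) = C b * yy k m + C c

/-- Membership in `C = Af₂(A) ∩ Tr₂(A)`. -/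
def InC {k : Type} [CommRing k] {m : ℕ}
    (φ : DiffPoly k 2 m ≃ₐ[k] DiffPoly k 2 m) : Prop :=
  IsAffine φ ∧ IsTriangular φ

/-- Membership in the set `A₀ = {id} ∪ {(y, x + a y) : a ∈ k}` of coset representatives. -/
def InA0 {k : Type} [CommRing k] {m : ℕ}
    (φ : DiffPoly k 2 m ≃ₐ[k] DiffPoly k 2 m) : Prop :=
  IsDiffAut φ ∧ (φ = 1 ∨ ∃ a : k,
    φ (xx k m) = yy k m ∧ φ (yy k m) = xx k m + C a * yy k m)

/-- Membership in the set `B₀ = {(x + q(y), y)}`, all homogeneous components of `q` of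
degree at least `2`, of coset representatives. -/
def InB0 {k : Type} [CommRing k] {m : ℕ}
    (φ : DiffPoly k 2 m ≃ₐ[k] DiffPoly k 2 m) : Prop :=
  IsDiffAut φ ∧ ∃ q ∈ diffAdjoin k {yy k m},
    (∀ d : ℕ, d < 2 → weightedHomogeneousComponent (dwt 2 m) d q = 0) ∧
    φ (xx k m) = xx k m + q ∧ φ (yy k m) = yy k m


section Generic
variable {k : Type} [Field k] {V : Type} [DecidableEq V]

/-- substitute `X v ↦ X`, `X w ↦ C (X w)` otherwise -/
noncomputable def eps (v : V) : MvPolynomial V k →ₐ[k] Polynomial (MvPolynomial V k) :=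
  aeval fun w => if w = v then Polynomial.X else Polynomial.C (X w)

lemma eval_eps (v : V) (p : MvPolynomial V k) :
    Polynomial.eval (X v) (eps v p) = p := by
  have : (Polynomial.evalRingHom (X v : MvPolynomial V k)).comp (eps (k := k) v).toRingHom
      = RingHom.id _ := by
    apply MvPolynomial.ringHom_ext
    · intro c
      simp [eps]
    · intro w
      by_cases h : w = v <;> simp [eps, h]
  exact RingHom.congr_fun this p

/-- polynomials all of whose coefficients lie in a given subalgebra -/
def coeffMem (T : Subalgebra k (MvPolynomial V k)) :
    Subalgebra k (Polynomial (MvPolynomial V k)) where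
  carrier := {q | ∀ d, q.coeff d ∈ T}
  add_mem' := by
    intro a b ha hb d
    rw [Polynomial.coeff_add]
    exact add_mem (ha d) (hb d)
  mul_mem' := by
    intro a b ha hb d
    rw [Polynomial.coeff_mul]
    exact Subalgebra.sum_mem _ fun x _ => mul_mem (ha x.1) (hb x.2)
  algebraMap_mem' := by
    intro c d
    rw [Polynomial.algebraMap_apply, Polynomial.coeff_C]
    split_ifs
    · exact Subalgebra.algebraMap_mem _ c
    · exact zero_mem _

lemma eps_coeff_mem {v : V} {s : Set V} {p : MvPolynomial V k}
    (hp : p ∈ supported k s) (d : ℕ) :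
    (eps v p).coeff d ∈ supported k (s \ {v}) := by
  have hle : supported k s ≤
      Subalgebra.comap (eps (k := k) v) (coeffMem (supported k (s \ {v}))) := by
    rw [supported_eq_adjoin_X]
    apply Algebra.adjoin_le
    rintro _ ⟨w, hw, rfl⟩
    rw [SetLike.mem_coe, Subalgebra.mem_comap]
    intro e
    by_cases h : w = v
    · subst h
      have : eps (k := k) w (X w) = Polynomial.X := by simp [eps]
      rw [this, Polynomial.coeff_X]
      split_ifs
      · exact one_mem _
      · exact zero_mem _
    · have : eps (k := k) v (X w) = Polynomial.C (X w) := by simp [eps, h]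
      rw [this, Polynomial.coeff_C]
      split_ifs
      · exact (X_mem_supported).mpr ⟨hw, h⟩
      · exact zero_mem _
  exact hle hp d

lemma eps_eq_C {v : V} {p : MvPolynomial V k} (hp : p ∈ supported k ({v}ᶜ : Set V)) :
    eps v p = Polynomial.C p := by
  have hle : supported k ({v}ᶜ : Set V) ≤
      AlgHom.equalizer (eps (k := k) v)
        (IsScalarTower.toAlgHom k (MvPolynomial V k) (Polynomial (MvPolynomial V k))) := by
    rw [supported_eq_adjoin_X]
    apply Algebra.adjoin_le
    rintro _ ⟨w, hw, rfl⟩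
    have hwv : w ≠ v := hw
    show eps v (X w) = _
    simp [eps, hwv, IsScalarTower.toAlgHom_apply, Polynomial.algebraMap_eq]
  have := hle hp
  rw [AlgHom.mem_equalizer] at this
  rw [this, IsScalarTower.toAlgHom_apply, Polynomial.algebraMap_eq]

lemma final_step {v : V} {b : MvPolynomial V k} (hb : v ∈ b.vars)
    (q : Polynomial (MvPolynomial V k)) (hq : q ≠ 0)
    (hc : ∀ d, q.coeff d ∈ supported k ({v}ᶜ : Set V)) :
    Polynomial.eval b q ≠ 0 := by
  intro h
  have key : eps v (Polynomial.eval b q) = q.comp (eps v b) := by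
    show (eps (k := k) v) (Polynomial.eval₂ (RingHom.id _) b q) = _
    rw [show ((eps (k := k) v) (Polynomial.eval₂ (RingHom.id _) b q))
        = Polynomial.eval₂ ((eps (k := k) v).toRingHom.comp (RingHom.id _)) (eps v b) q from
      Polynomial.hom_eval₂ q _ _ b]
    rw [RingHom.comp_id]
    show Polynomial.eval₂ _ _ q = Polynomial.eval₂ (Polynomial.C) (eps v b) q
    rw [Polynomial.eval₂_eq_sum_range, Polynomial.eval₂_eq_sum_range]
    refine Finset.sum_congr rfl fun i _ => ?_
    rw [show (eps (k := k) v).toRingHom (q.coeff i) = eps v (q.coeff i) from rfl,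
      eps_eq_C (hc i)]
  rw [h, map_zero] at key
  have hcomp := key.symm
  rw [Polynomial.comp_eq_zero_iff] at hcomp
  rcases hcomp with h1 | ⟨_, h2⟩
  · exact hq h1
  · -- eps v b is a constant; then b has no v
    have hcoeff : (eps v b).coeff 0 ∈ supported k (Set.univ \ {v}) := by
      apply eps_coeff_mem
      exact mem_supported.mpr (by simp)
    have hb' : b = (eps v b).coeff 0 := by
      have := eval_eps v b
      rw [h2] at this
      simpa using this.symm
    rw [← Set.compl_eq_univ_diff] at hcoeff
    rw [← hb'] at hcoeff
    have := mem_supported.mp hcoeff (Finset.mem_coe.mpr hb)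
    simp at this

lemma keyIndep {ι : Type} [DecidableEq ι] [LinearOrder ι]
    (g : ι → MvPolynomial V k) (v : ι → V)
    (h1 : ∀ i, v i ∈ (g i).vars)
    (h2 : ∀ i j : ι, i < j → v j ∉ (g i).vars) :
    AlgebraicIndependent k g := by
  rw [algebraicIndependent_iff]
  suffices H : ∀ (N : ℕ) (P : MvPolynomial ι k), P.vars.card ≤ N → P ≠ 0 →
      aeval g P ≠ 0 by
    intro p hp
    by_contra hne
    exact H p.vars.card p le_rfl hne hp
  intro N
  induction N with
  | zero =>
    intro P hcard hP
    have hv : P.vars = ∅ := Finset.card_eq_zero.mp (Nat.le_zero.mp hcard)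
    have : P ∈ supported k (∅ : Set ι) := mem_supported.mpr (by simp [hv])
    rw [supported_empty, Algebra.mem_bot] at this
    obtain ⟨c, rfl⟩ := this
    rw [MvPolynomial.algebraMap_eq] at hP ⊢
    have hc : c ≠ 0 := fun h => hP (by rw [h, map_zero])
    rw [aeval_C]
    rw [MvPolynomial.algebraMap_eq]
    exact fun h => hc (MvPolynomial.C_eq_zero.mp h)
  | succ N ih =>
    intro P hcard hP
    rcases Finset.eq_empty_or_nonempty P.vars with hv | hv
    · -- same as base case
      have : P ∈ supported k (∅ : Set ι) := mem_supported.mpr (by simp [hv])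
      rw [supported_empty, Algebra.mem_bot] at this
      obtain ⟨c, rfl⟩ := this
      rw [MvPolynomial.algebraMap_eq] at hP ⊢
      have hc : c ≠ 0 := fun h => hP (by rw [h, map_zero])
      rw [aeval_C, MvPolynomial.algebraMap_eq]
      exact fun h => hc (MvPolynomial.C_eq_zero.mp h)
    · set θs := P.vars.max' hv with hθs
      have hθmem : θs ∈ P.vars := P.vars.max'_mem hv
      set q : Polynomial (MvPolynomial ι k) := eps θs P with hqdef
      have hqP : Polynomial.eval (X θs) q = P := eval_eps θs P
      have hq0 : q ≠ 0 := by
        intro h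
        rw [h, Polynomial.eval_zero] at hqP
        exact hP hqP.symm
      have hcs : ∀ d, q.coeff d ∈ supported k ((↑P.vars : Set ι) \ {θs}) := by
        intro d
        exact eps_coeff_mem (mem_supported.mpr subset_rfl) d
      -- natDegree ≥ 1
      have hD1 : 1 ≤ q.natDegree := by
        by_contra h
        have hD0 : q.natDegree = 0 := by omega
        have := Polynomial.eq_C_of_natDegree_eq_zero hD0
        rw [this, Polynomial.eval_C] at hqP
        have hmem := hcs 0
        rw [hqP] at hmem
        have := mem_supported.mp hmem (Finset.mem_coe.mpr hθmem)
        simp at this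
      set D := q.natDegree
      have hQD : q.coeff D ≠ 0 := by
        rw [show q.coeff D = q.leadingCoeff from rfl]
        exact Polynomial.leadingCoeff_ne_zero.mpr hq0
      -- IH applies to the leading coefficient
      have hAD : aeval g (q.coeff D) ≠ 0 := by
        apply ih
        · -- card bound
          have hsub : (q.coeff D).vars ⊆ P.vars.erase θs := by
            intro x hx
            have := mem_supported.mp (hcs D) (Finset.mem_coe.mpr hx)
            rw [← Finset.coe_erase] at this
            exact Finset.mem_coe.mp this
          calc (q.coeff D).vars.card ≤ (P.vars.erase θs).card := Finset.card_le_card hsub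
            _ = P.vars.card - 1 := Finset.card_erase_of_mem hθmem
            _ ≤ N := by omega
        · exact hQD
      set φ := (aeval g : MvPolynomial ι k →ₐ[k] MvPolynomial V k).toRingHom with hφ
      set q' := q.map φ with hq'def
      have hcoeffq' : ∀ d, q'.coeff d = aeval g (q.coeff d) := by
        intro d; rw [hq'def, Polynomial.coeff_map]; rfl
      have hq'0 : q' ≠ 0 := by
        intro h
        apply hAD
        rw [← hcoeffq' D, h, Polynomial.coeff_zero]
      have hc' : ∀ d, q'.coeff d ∈ supported k ({v θs}ᶜ : Set V) := by
        intro d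
        rw [hcoeffq' d]
        have h1' : q.coeff d ∈ Algebra.adjoin k (X '' ((↑P.vars : Set ι) \ {θs})) := by
          rw [← supported_eq_adjoin_X]; exact hcs d
        have h2' : aeval g (q.coeff d) ∈
            Subalgebra.map (aeval g) (Algebra.adjoin k (X '' ((↑P.vars : Set ι) \ {θs}))) :=
          Subalgebra.mem_map.mpr ⟨_, h1', rfl⟩
        rw [AlgHom.map_adjoin] at h2'
        refine Algebra.adjoin_le ?_ h2'
        rintro _ ⟨_, ⟨θ, hθ, rfl⟩, rfl⟩
        rw [SetLike.mem_coe, aeval_X]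
        have hθP : θ ∈ P.vars := Finset.mem_coe.mp hθ.1
        have hθne : θ ≠ θs := hθ.2
        have hθlt : θ < θs := lt_of_le_of_ne (P.vars.le_max' θ hθP) hθne
        have := h2 θ θs hθlt
        exact mem_supported.mpr (by
          intro x hx
          simp only [Set.mem_compl_iff, Set.mem_singleton_iff]
          rintro rfl
          exact this (Finset.mem_coe.mp hx))
      have heval : aeval g P = Polynomial.eval (g θs) q' := by
        rw [← hqP]
        show φ (Polynomial.eval₂ (RingHom.id _) (X θs) q) = _
        rw [show φ (Polynomial.eval₂ (RingHom.id _) (X θs) q)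
            = Polynomial.eval₂ (φ.comp (RingHom.id _)) (φ (X θs)) q from
          Polynomial.hom_eval₂ q _ _ _]
        rw [RingHom.comp_id, ← Polynomial.eval_map]
        congr 1
        show (aeval g) (X θs) = g θs
        rw [aeval_X]
      rw [heval]
      exact final_step (h1 θs) q' hq'0 hc'
end Generic

section DegLemmas
variable {m : ℕ}
def fdeg (τ : Fin m →₀ ℕ) : ℕ := τ.sum fun _ v => v
lemma fdeg_add (a b : Fin m →₀ ℕ) : fdeg (a + b) = fdeg a + fdeg b :=
  Finsupp.sum_add_index' (fun _ => rfl) (fun _ _ _ => rfl)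
lemma fdeg_single (i : Fin m) : fdeg (Finsupp.single i 1) = 1 := by
  simp [fdeg]
lemma fdeg_eq_zero {a : Fin m →₀ ℕ} (h : fdeg a = 0) : a = 0 := by
  ext i
  show a i = 0
  by_contra hi
  have h2 : i ∈ a.support := Finsupp.mem_support_iff.mpr hi
  have : a i ≤ fdeg a := Finset.single_le_sum (f := fun i => a i) (fun _ _ => Nat.zero_le _) h2
  omega
lemma fdeg_mono {a b : Fin m →₀ ℕ} (h : a ≤ b) : fdeg a ≤ fdeg b := by
  have : b - a + a = b := tsub_add_cancel_of_le h
  calc fdeg a ≤ fdeg (b - a) + fdeg a := Nat.le_add_left _ _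
    _ = fdeg (b - a + a) := (fdeg_add _ _).symm
    _ = fdeg b := by rw [this]

lemma eq_of_le_of_fdeg_le {a b : Fin m →₀ ℕ} (h : a ≤ b) (h2 : fdeg b ≤ fdeg a) : a = b := by
  have hc : b - a + a = b := tsub_add_cancel_of_le h
  have : fdeg (b - a) + fdeg a = fdeg b := by rw [← fdeg_add, hc]
  have : fdeg (b - a) = 0 := by omega
  have : b - a = 0 := fdeg_eq_zero this
  rw [← hc, this, zero_add]


/-- the degree-lexicographic ranking on operators -/
def ordm (θ : Fin m →₀ ℕ) : ℕ ×ₗ Lex (Fin m →₀ ℕ) := toLex (fdeg θ, toLex θ)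

lemma ordm_inj : Function.Injective (ordm (m := m)) := by
  intro a b h
  have := congrArg (fun x => (ofLex x).2) h
  simpa [ordm] using this

/-- the key combinatorial fact -/
lemma order_key {θ θ' τ τ0 : Fin m →₀ ℕ} {σ : Fin m →₀ ℕ}
    (hord : ordm θ < ordm θ')
    (hmax : toLex (fdeg τ, toLex τ) ≤ toLex (fdeg τ0, toLex τ0))
    (hσ : σ ≤ θ) (heq : τ0 + θ' = τ + σ) : False := by
  have hdeg : fdeg τ0 + fdeg θ' = fdeg τ + fdeg σ := by
    rw [← fdeg_add, ← fdeg_add, heq]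
  have hσθ : fdeg σ ≤ fdeg θ := fdeg_mono hσ
  have hττ0 : fdeg τ ≤ fdeg τ0 := by
    rcases Prod.Lex.toLex_le_toLex.mp hmax with h | ⟨h, _⟩
    · exact le_of_lt h
    · exact le_of_eq h
  rcases Prod.Lex.toLex_lt_toLex.mp hord with h | ⟨hdeq, hlex⟩
  · simp only at h
    omega
  · simp only at hdeq hlex
    have h1 : fdeg τ = fdeg τ0 := by omega
    have h2 : fdeg σ = fdeg θ := by omega
    have hσeq : σ = θ := eq_of_le_of_fdeg_le hσ (le_of_eq h2.symm)
    subst hσeq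
    have hτlex : toLex τ ≤ toLex τ0 := by
      rcases Prod.Lex.toLex_le_toLex.mp hmax with h | ⟨_, h⟩
      · simp only at h; omega
      · exact h
    have hlt : toLex (τ + σ) < toLex (τ0 + θ') := by
      calc toLex (τ + σ) = toLex τ + toLex σ := rfl
        _ ≤ toLex τ0 + toLex σ := add_le_add hτlex le_rfl
        _ < toLex τ0 + toLex θ' := add_lt_add_of_le_of_lt le_rfl hlex
        _ = toLex (τ0 + θ') := rfl
    rw [heq] at hlt
    exact lt_irrefl _ hlt

end DegLemmas

section FoldrLemmas
variable {β : Type}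

lemma foldr_const : ∀ (M : ℕ) (x : β), Fin.foldr M (fun _ g => g) x = x
  | 0, x => by rw [Fin.foldr_zero]
  | M + 1, x => by rw [Fin.foldr_succ]; exact foldr_const M x

lemma foldr_update : ∀ {M : ℕ} (u : Fin M → β → β) (φ : β → β) (i : Fin M),
    (∀ j x, φ (u j x) = u j (φ x)) → ∀ x : β,
    Fin.foldr M (fun j y => if j = i then φ (u j y) else u j y) x = φ (Fin.foldr M u x) := by
  intro M
  induction M with
  | zero => intro u φ i h x; exact i.elim0
  | succ M ih =>
    intro u φ i h x
    rw [Fin.foldr_succ, Fin.foldr_succ]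
    rcases Fin.eq_zero_or_eq_succ i with rfl | ⟨i', rfl⟩
    · rw [if_pos rfl]
      rw [show (Fin.foldr M (fun j => (fun (j : Fin (M+1)) (y : β) => if j = 0 then φ (u j y) else u j y) j.succ) x) = Fin.foldr M (fun j => u j.succ) x from congrFun (congrArg (Fin.foldr M) (funext fun j => funext fun y => if_neg (Fin.succ_ne_zero j))) x]
    · rw [if_neg (Fin.succ_ne_zero i').symm]
      have hih := ih (fun j => u j.succ) φ i' (fun j y => h j.succ y) x
      rw [show (Fin.foldr M (fun j => (fun (j : Fin (M+1)) (y : β) => if j = i'.succ then φ (u j y) else u j y) j.succ) x) = φ (Fin.foldr M (fun j => u j.succ) x) from (congrFun (congrArg (Fin.foldr M) (funext fun j => funext fun y => by simp only [Fin.succ_inj])) x).trans hih]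
      exact (h 0 _).symm
end FoldrLemmas

section Diff
variable {k : Type} [Field k] {n m : ℕ}

noncomputable def shiftV (i : Fin m) (w : Fin n × DOp m) : Fin n × DOp m := (w.1, w.2 + Finsupp.single i 1)

lemma shiftV_ne (i : Fin m) (w : Fin n × DOp m) : w ≠ shiftV i w := by
  intro h
  have := congrArg (fun p => fdeg p.2) h
  simp only [shiftV, fdeg_add, fdeg_single] at this
  omega

lemma shiftV_inj (i : Fin m) {a b : Fin n × DOp m} (h : shiftV i a = shiftV i b) : a = b := by
  have h1 := congrArg Prod.fst h
  have h2 := congrArg Prod.snd h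
  simp only [shiftV] at h1 h2
  exact Prod.ext h1 (add_right_cancel h2)

lemma der_X (i : Fin m) (w : Fin n × DOp m) :
    der k n m i (X w : DiffPoly k n m) = X (shiftV i w) :=
  MvPolynomial.mkDerivation_X _ _ _

lemma der_comm (i j : Fin m) (p : DiffPoly k n m) :
    der k n m i (der k n m j p) = der k n m j (der k n m i p) := by
  have h : ⁅der k n m i, der k n m j⁆ = (0 : Derivation k (DiffPoly k n m) (DiffPoly k n m)) := by
    apply MvPolynomial.derivation_ext
    intro w
    rw [Derivation.commutator_apply, der_X, der_X, der_X, der_X]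
    simp only [shiftV, Derivation.zero_apply]
    rw [add_right_comm]
    exact sub_self _
  have h2 := DFunLike.congr_fun h p
  rw [Derivation.commutator_apply, Derivation.zero_apply, sub_eq_zero] at h2
  exact h2

lemma commute_der (i j : Fin m) :
    Function.Commute ⇑(der k n m i) ⇑(der k n m j) := fun p => der_comm i j p

lemma applyOp_zero (f : DiffPoly k n m) : applyOp (0 : DOp m) f = f := by
  unfold applyOp
  have heq : (fun (i : Fin m) (g : DiffPoly k n m) => (⇑(der k n m i))^[(0 : DOp m) i] g)
      = fun _ g => g := by
    funext i g
    rw [Finsupp.coe_zero, Pi.zero_apply, Function.iterate_zero, id]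
  rw [heq, foldr_const]

lemma applyOp_add_single (θ : DOp m) (i : Fin m) (f : DiffPoly k n m) :
    applyOp (θ + Finsupp.single i 1) f = der k n m i (applyOp θ f) := by
  unfold applyOp
  have hfun : (fun (j : Fin m) (g : DiffPoly k n m) =>
      (⇑(der k n m j))^[(θ + Finsupp.single i 1 : DOp m) j] g)
      = fun j g => if j = i then der k n m i ((⇑(der k n m j))^[θ j] g)
          else (⇑(der k n m j))^[θ j] g := by
    funext j g
    by_cases h : j = i
    · subst h
      rw [if_pos rfl]
      have h1 : (θ + Finsupp.single j 1 : DOp m) j = θ j + 1 := by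
        rw [Finsupp.add_apply, Finsupp.single_apply, if_pos rfl]
      rw [h1, Function.iterate_succ']
      rfl
    · rw [if_neg h]
      have h1 : (θ + Finsupp.single i 1 : DOp m) j = θ j := by
        rw [Finsupp.add_apply, Finsupp.single_apply, if_neg (Ne.symm h), add_zero]
      rw [h1]
  rw [hfun]
  exact foldr_update (fun j => (⇑(der k n m j))^[θ j]) (⇑(der k n m i)) i
    (fun j y => ((commute_der i j).iterate_right (θ j)) y) f

/-- subalgebra of elements of `A'` whose derivative is in `A'` -/
def derClosed (D : Derivation k (DiffPoly k n m) (DiffPoly k n m))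
    (A' : Subalgebra k (DiffPoly k n m)) : Subalgebra k (DiffPoly k n m) where
  carrier := {x | x ∈ A' ∧ D x ∈ A'}
  add_mem' := by
    rintro a b ⟨ha, ha'⟩ ⟨hb, hb'⟩
    exact ⟨add_mem ha hb, by rw [map_add]; exact add_mem ha' hb'⟩
  mul_mem' := by
    rintro a b ⟨ha, ha'⟩ ⟨hb, hb'⟩
    refine ⟨mul_mem ha hb, ?_⟩
    rw [Derivation.leibniz, smul_eq_mul, smul_eq_mul]
    exact add_mem (mul_mem ha hb') (mul_mem hb ha')
  algebraMap_mem' := fun c => ⟨Subalgebra.algebraMap_mem _ c, by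
    rw [Derivation.map_algebraMap]; exact zero_mem _⟩

lemma der_mem_supported {T : Set (Fin n × DOp m)} {p : DiffPoly k n m} (i : Fin m)
    (hp : p ∈ supported k T) :
    der k n m i p ∈ supported k (T ∪ shiftV i '' T) := by
  have hle : supported k T ≤ derClosed (der k n m i) (supported k (T ∪ shiftV i '' T)) := by
    rw [supported_eq_adjoin_X]
    apply Algebra.adjoin_le
    rintro _ ⟨w, hw, rfl⟩
    refine ⟨X_mem_supported.mpr (Or.inl hw), ?_⟩
    rw [der_X]
    exact X_mem_supported.mpr (Or.inr ⟨w, hw, rfl⟩)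
  exact (hle hp).2

lemma applyOp_supported (f : DiffPoly k n m) : ∀ (N : ℕ) (θ : DOp m), fdeg θ = N →
    applyOp θ f ∈ supported k
      {p : Fin n × DOp m | ∃ w, w ∈ f.vars ∧ ∃ σ, σ ≤ θ ∧ p = (w.1, w.2 + σ)} := by
  intro N
  induction N with
  | zero =>
    intro θ h
    have h0 : θ = 0 := fdeg_eq_zero h
    subst h0
    rw [applyOp_zero]
    refine mem_supported.mpr fun x hx => ?_
    exact ⟨x, Finset.mem_coe.mp hx, 0, le_refl _, by simp⟩
  | succ N ih =>
    intro θ hθ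
    obtain ⟨i, hi⟩ : ∃ i, θ i ≠ 0 := by
      by_contra h'
      push_neg at h'
      have : θ = 0 := Finsupp.ext h'
      rw [this] at hθ
      rw [show fdeg (0 : DOp m) = 0 from rfl] at hθ
      omega
    have hsingle_le : Finsupp.single i 1 ≤ θ := Finsupp.single_le_iff.mpr (by omega)
    have hθ'add : (θ - Finsupp.single i 1) + Finsupp.single i 1 = θ :=
      tsub_add_cancel_of_le hsingle_le
    have hdeg' : fdeg (θ - Finsupp.single i 1) = N := by
      have h2 := fdeg_add (θ - Finsupp.single i 1) (Finsupp.single i 1)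
      rw [hθ'add, fdeg_single, hθ] at h2
      omega
    rw [← hθ'add, applyOp_add_single]
    refine supported_mono ?_ (der_mem_supported i (ih (θ - Finsupp.single i 1) hdeg'))
    rintro p (⟨w, hw, σ, hσ, rfl⟩ | ⟨q, ⟨w, hw, σ, hσ, rfl⟩, rfl⟩)
    · exact ⟨w, hw, σ, le_trans hσ le_self_add, rfl⟩
    · exact ⟨w, hw, σ + Finsupp.single i 1, add_le_add hσ le_rfl, by
        simp only [shiftV]
        rw [add_assoc]⟩

lemma pderiv_der (i : Fin m) (w : Fin n × DOp m) (p : DiffPoly k n m) :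
    pderiv (shiftV i w) (der k n m i p) =
      der k n m i (pderiv (shiftV i w) p) + pderiv w p := by
  induction p using MvPolynomial.induction_on with
  | C c =>
    rw [MvPolynomial.derivation_C, pderiv_C, pderiv_C, map_zero, map_zero, add_zero]
  | add p q hp hq =>
    rw [map_add, map_add, map_add, map_add, map_add, hp, hq]
    abel
  | mul_X p u hp =>
    have hder_mul : der k n m i (p * X u) = p * X (shiftV i u) + X u * der k n m i p := by
      rw [Derivation.leibniz, der_X, smul_eq_mul, smul_eq_mul]
    have hXshift : der k n m i (pderiv (shiftV i w) p * X u)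
        = pderiv (shiftV i w) p * X (shiftV i u) + X u * der k n m i (pderiv (shiftV i w) p) := by
      rw [Derivation.leibniz, der_X, smul_eq_mul, smul_eq_mul]
    by_cases h1 : u = w
    · subst h1
      simp only [hder_mul, map_add, pderiv_mul, hp, pderiv_X_self,
        pderiv_X_of_ne (shiftV_ne i u), mul_zero, mul_one, zero_mul, add_zero, zero_add,
        hXshift]
      ring
    · have hne1 : shiftV i u ≠ shiftV i w := fun hh => h1 (shiftV_inj i hh)
      by_cases h2 : u = shiftV i w
      · subst h2
        simp only [hder_mul, map_add, pderiv_mul, hp, pderiv_X_self,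
          pderiv_X_of_ne hne1, pderiv_X_of_ne (Ne.symm (shiftV_ne i w)),
          mul_zero, mul_one, zero_mul, one_mul, add_zero, zero_add, hXshift]
        ring
      · simp only [hder_mul, map_add, pderiv_mul, hp, pderiv_X_of_ne hne1,
          pderiv_X_of_ne h2, pderiv_X_of_ne h1,
          mul_zero, mul_one, zero_mul, one_mul, add_zero, zero_add, hXshift]
        ring

lemma coeff_pderiv (u : Fin n × DOp m) (f : DiffPoly k n m) (b : (Fin n × DOp m) →₀ ℕ) :
    coeff b (pderiv u f) = coeff (b + Finsupp.single u 1) f * ((b u + 1 : ℕ) : k) := by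
  induction f using MvPolynomial.induction_on' with
  | add p q hp hq =>
    rw [map_add, coeff_add, coeff_add, hp, hq, add_mul]
  | monomial a c =>
    rw [pderiv_monomial, coeff_monomial, coeff_monomial]
    by_cases hau : a u = 0
    · have ha : a - Finsupp.single u 1 = a := by
        ext x
        rw [Finsupp.tsub_apply, Finsupp.single_apply]
        split_ifs with h
        · subst h; omega
        · omega
      have hne : a ≠ b + Finsupp.single u 1 := by
        intro h
        have h2 : a u = b u + 1 := by
          rw [h, Finsupp.add_apply, Finsupp.single_apply, if_pos rfl]
        omega
      rw [ha, if_neg hne]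
      split_ifs with h
      · rw [hau]; simp
      · rw [zero_mul]
    · by_cases h : a - Finsupp.single u 1 = b
      · have ha : a = b + Finsupp.single u 1 := by
          ext x
          have hx : a x - (Finsupp.single u 1 : (Fin n × DOp m) →₀ ℕ) x = b x := by
            rw [← Finsupp.tsub_apply, h]
          rw [Finsupp.add_apply]
          rw [Finsupp.single_apply] at hx ⊢
          split_ifs at hx ⊢ with hyx
          · subst hyx; omega
          · omega
        have hbu : a u = b u + 1 := by
          rw [ha, Finsupp.add_apply, Finsupp.single_apply, if_pos rfl]
        rw [if_pos h, if_pos ha, hbu]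
      · have hne : a ≠ b + Finsupp.single u 1 := by
          intro hh
          apply h
          ext x
          rw [Finsupp.tsub_apply, hh, Finsupp.add_apply]
          have : (Finsupp.single u 1 : (Fin n × DOp m) →₀ ℕ) x ≤ 1 := by
            rw [Finsupp.single_apply]; split_ifs <;> omega
          omega
        rw [if_neg h, if_neg hne, zero_mul]

lemma pderiv_ne_zero [CharZero k] {u : Fin n × DOp m} {f : DiffPoly k n m}
    (hu : u ∈ f.vars) : pderiv u f ≠ 0 := by
  intro h
  obtain ⟨d, hd, hud⟩ := (mem_vars u).mp hu
  have hdu : d u ≠ 0 := Finsupp.mem_support_iff.mp hud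
  have hb := congrArg (coeff (d - Finsupp.single u 1)) h
  rw [_root_.coeff_pderiv, coeff_zero] at hb
  have hdd : d - Finsupp.single u 1 + Finsupp.single u 1 = d := by
    ext x
    rw [Finsupp.add_apply, Finsupp.tsub_apply, Finsupp.single_apply]
    split_ifs with hx
    · subst hx; omega
    · omega
  rw [hdd] at hb
  rcases mul_eq_zero.mp hb with h1 | h2
  · exact MvPolynomial.mem_support_iff.mp hd h1
  · exact Nat.cast_ne_zero.mpr (Nat.succ_ne_zero _) h2

lemma pderiv_applyOp (f : DiffPoly k n m) (u : Fin n × DOp m)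
    (hmax : ∀ w ∈ f.vars, fdeg w.2 ≤ fdeg u.2) :
    ∀ (N : ℕ) (θ : DOp m), fdeg θ = N →
      pderiv (u.1, u.2 + θ) (applyOp θ f) = pderiv u f := by
  intro N
  induction N with
  | zero =>
    intro θ h
    have h0 : θ = 0 := fdeg_eq_zero h
    subst h0
    rw [applyOp_zero, add_zero]
  | succ N ih =>
    intro θ hθ
    obtain ⟨i, hi⟩ : ∃ i, θ i ≠ 0 := by
      by_contra h'
      push_neg at h'
      have : θ = 0 := Finsupp.ext h'
      rw [this] at hθ
      rw [show fdeg (0 : DOp m) = 0 from rfl] at hθ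
      omega
    have hsingle_le : Finsupp.single i 1 ≤ θ := Finsupp.single_le_iff.mpr (by omega)
    have hθ'add : (θ - Finsupp.single i 1) + Finsupp.single i 1 = θ :=
      tsub_add_cancel_of_le hsingle_le
    have hdeg' : fdeg (θ - Finsupp.single i 1) = N := by
      have h2 := fdeg_add (θ - Finsupp.single i 1) (Finsupp.single i 1)
      rw [hθ'add, fdeg_single, hθ] at h2
      omega
    rw [← hθ'add, applyOp_add_single]
    have hkey : (u.1, u.2 + ((θ - Finsupp.single i 1) + Finsupp.single i 1))
        = shiftV i (u.1, u.2 + (θ - Finsupp.single i 1)) := by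
      simp only [shiftV]
      rw [add_assoc]
    rw [hkey, pderiv_der i (u.1, u.2 + (θ - Finsupp.single i 1))]
    have hzero : pderiv (shiftV i (u.1, u.2 + (θ - Finsupp.single i 1)))
        (applyOp (θ - Finsupp.single i 1) f) = 0 := by
      apply pderiv_eq_zero_of_notMem_vars
      intro hmem
      have hsup := applyOp_supported f (fdeg (θ - Finsupp.single i 1)) (θ - Finsupp.single i 1) rfl
      obtain ⟨w, hw, σ, hσ, hpeq⟩ := mem_supported.mp hsup (Finset.mem_coe.mpr hmem)
      have hsnd := congrArg Prod.snd hpeq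
      simp only [shiftV] at hsnd
      have hdsnd := congrArg fdeg hsnd
      rw [fdeg_add, fdeg_add, fdeg_add, fdeg_single] at hdsnd
      have hb1 := hmax w hw
      have hb2 : fdeg σ ≤ fdeg (θ - Finsupp.single i 1) := by
        have hc : (θ - Finsupp.single i 1) - σ + σ = θ - Finsupp.single i 1 :=
          tsub_add_cancel_of_le hσ
        have := fdeg_add ((θ - Finsupp.single i 1) - σ) σ
        rw [hc] at this
        omega
      omega
    rw [hzero, map_zero, zero_add]
    exact ih (θ - Finsupp.single i 1) hdeg'
end Diff


/-- Every element of `k{x_1,…,x_n}` not in `k` is differentially transcendental over `k`: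
no nonzero differential polynomial in one variable annihilates it; equivalently the family
of all its derivatives is algebraically independent over `k`. -/
theorem stmt0 {k : Type} [Field k] [CharZero k] {n m : ℕ}
    (f : DiffPoly k n m) (hf : ∀ c : k, f ≠ C c) :
    (∀ g : DiffPoly k 1 m,
        aeval (fun p : Fin 1 × DOp m => applyOp p.2 f) g = 0 → g = 0) ∧
      AlgebraicIndependent k (fun θ : DOp m => applyOp θ f) := by
  classical
  have hvne : f.vars.Nonempty := by
    rcases Finset.eq_empty_or_nonempty f.vars with h | h
    · exfalso
      have hsup : f ∈ supported k (∅ : Set (Fin n × DOp m)) :=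
        mem_supported.mpr (by simp [h])
      rw [supported_empty, Algebra.mem_bot] at hsup
      obtain ⟨c, hc⟩ := hsup
      exact hf c (by rw [← hc, MvPolynomial.algebraMap_eq])
    · exact h
  obtain ⟨u, hu, hmaxall⟩ :=
    Finset.exists_max_image f.vars (fun w => toLex (fdeg w.2, toLex w.2)) hvne
  have hmaxdeg : ∀ w ∈ f.vars, fdeg w.2 ≤ fdeg u.2 := by
    intro w hw
    rcases Prod.Lex.toLex_le_toLex.mp (hmaxall w hw) with h | ⟨h, _⟩
    · exact le_of_lt h
    · exact le_of_eq h
  have hAI : AlgebraicIndependent k fun θ : DOp m => applyOp θ f := by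
    letI lo : LinearOrder (DOp m) := LinearOrder.lift' ordm ordm_inj
    apply keyIndep (g := fun θ : DOp m => applyOp θ f) (v := fun θ : DOp m => (u.1, u.2 + θ))
    · intro θ
      by_contra hnot
      have h0 := pderiv_eq_zero_of_notMem_vars hnot
      rw [pderiv_applyOp f u hmaxdeg (fdeg θ) θ rfl] at h0
      exact pderiv_ne_zero hu h0
    · intro θ θ' hlt hmem
      have hsup := applyOp_supported f (fdeg θ) θ rfl
      obtain ⟨w, hw, σ, hσ, hpeq⟩ := mem_supported.mp hsup (Finset.mem_coe.mpr hmem)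
      have heq2 : u.2 + θ' = w.2 + σ := congrArg Prod.snd hpeq
      exact order_key (show ordm θ < ordm θ' from hlt) (hmaxall w hw) hσ heq2
  refine ⟨?_, hAI⟩
  intro g hg
  have hsnd : Function.Injective (Prod.snd : Fin 1 × DOp m → DOp m) := by
    intro a b h
    exact Prod.ext (Subsingleton.elim _ _) h
  have hAI2 := hAI.comp Prod.snd hsnd
  exact algebraicIndependent_iff.mp hAI2 g hg
end

section
/- Let A = k{x,y} be the differential polynomial algebra over a differential field k of characteristic 0 with at least two commuting derivations δ_1, δ_2, and let w = x^{δ_1} − y^{δ_2}. Then the differential endomorphism δ of A determined by δ(x) = x + w^{δ_2} and δ(y) = y + w^{δ_1} is an automorphism of A; its inverse is determined by x ↦ x − v^{δ_2} and y ↦ y − v^{δ_1} where v = x^{δ_1} − y^{δ_2} (one checks δ(x)^{δ_1} − δ(y)^{δ_2} = w). -/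
open MvPolynomial

section Anick

variable {k : Type} [CommRing k] {m : ℕ}

theorem der_X_s14 (i : Fin m) (p : Fin 2 × DOp m) :
    der k 2 m i (X p) = X (p.1, p.2 + Finsupp.single i 1) := by
  simp [der, MvPolynomial.mkDerivation_X]

noncomputable def corr (i1 i2 : Fin m) (p : Fin 2 × DOp m) : DiffPoly k 2 m :=
  X (0, p.2 + Finsupp.single (if p.1 = 0 then i2 else i1) 1 + Finsupp.single i1 1) -
  X (1, p.2 + Finsupp.single (if p.1 = 0 then i2 else i1) 1 + Finsupp.single i2 1)

noncomputable def Fp (i1 i2 : Fin m) : DiffPoly k 2 m →ₐ[k] DiffPoly k 2 m :=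
  aeval fun p => X p + corr i1 i2 p

noncomputable def Fm (i1 i2 : Fin m) : DiffPoly k 2 m →ₐ[k] DiffPoly k 2 m :=
  aeval fun p => X p - corr i1 i2 p

set_option maxHeartbeats 1000000 in
theorem Fm_comp_Fp (i1 i2 : Fin m) :
    (Fm (k := k) i1 i2).comp (Fp i1 i2) = AlgHom.id k (DiffPoly k 2 m) := by
  apply MvPolynomial.algHom_ext
  rintro ⟨j, θ⟩
  fin_cases j <;>
    simp [Fp, Fm, corr, add_assoc, add_comm, add_left_comm]

end Anick
section T
variable {k : Type} [CommRing k] {m : ℕ}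
theorem Fp_der (i1 i2 : Fin m) (i : Fin m) (f : DiffPoly k 2 m) :
    Fp (k := k) i1 i2 (der k 2 m i f) = der k 2 m i (Fp i1 i2 f) := by
  induction f using MvPolynomial.induction_on with
  | C a => simp
  | add p q hp hq => simp [hp, hq]
  | mul_X p n hp =>
      have hX : Fp (k := k) i1 i2 (der k 2 m i (X n)) = der k 2 m i (Fp i1 i2 (X n)) := by
        rcases n with ⟨j, θ⟩
        fin_cases j <;>
          simp [Fp, corr, der_X_s14, add_assoc, add_comm, add_left_comm]
      rw [Derivation.leibniz, smul_eq_mul, smul_eq_mul, map_add, map_mul, map_mul, hp, hX,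
        map_mul, Derivation.leibniz, smul_eq_mul, smul_eq_mul]
end T

section T2
variable {k : Type} [CommRing k] {m : ℕ}

theorem Fp_comp_Fm (i1 i2 : Fin m) :
    (Fp (k := k) i1 i2).comp (Fm i1 i2) = AlgHom.id k (DiffPoly k 2 m) := by
  apply MvPolynomial.algHom_ext
  rintro ⟨j, θ⟩
  fin_cases j <;>
    simp [Fp, Fm, corr, add_assoc, add_comm, add_left_comm]

noncomputable def anick (i1 i2 : Fin m) : DiffPoly k 2 m ≃ₐ[k] DiffPoly k 2 m :=
  AlgEquiv.ofAlgHom (Fp i1 i2) (Fm i1 i2) (Fp_comp_Fm i1 i2) (Fm_comp_Fp i1 i2)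

end T2

section T3
variable {k : Type} [CommRing k] {m : ℕ}
theorem anick_apply (i1 i2 : Fin m) (f : DiffPoly k 2 m) : anick (k := k) i1 i2 f = Fp i1 i2 f := rfl
theorem anick_symm_apply (i1 i2 : Fin m) (f : DiffPoly k 2 m) : (anick (k := k) i1 i2).symm f = Fm i1 i2 f := rfl
theorem anick_diffaut (i1 i2 : Fin m) : IsDiffAut (anick (k := k) i1 i2) := fun i x => Fp_der i1 i2 i x
end T3
/-- The Anick-type endomorphism `x ↦ x + w^{δ₂}`, `y ↦ y + w^{δ₁}` with
`w = x^{δ₁} - y^{δ₂}` is an automorphism of `k{x,y}` (for at least two commuting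
derivations), with inverse `x ↦ x - w^{δ₂}`, `y ↦ y - w^{δ₁}`. -/
theorem stmt14 {k : Type} [Field k] [CharZero k] {m : ℕ} (hm : 2 ≤ m) :
    let i1 : Fin m := ⟨0, by omega⟩
    let i2 : Fin m := ⟨1, by omega⟩
    let w : DiffPoly k 2 m := der k 2 m i1 (xx k m) - der k 2 m i2 (yy k m)
    ∃ e : DiffPoly k 2 m ≃ₐ[k] DiffPoly k 2 m, IsDiffAut e ∧
      e (xx k m) = xx k m + der k 2 m i2 w ∧
      e (yy k m) = yy k m + der k 2 m i1 w ∧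
      e.symm (xx k m) = xx k m - der k 2 m i2 w ∧
      e.symm (yy k m) = yy k m - der k 2 m i1 w := by
  intro i1 i2 w
  refine ⟨anick i1 i2, anick_diffaut i1 i2, ?_, ?_, ?_, ?_⟩
  · rw [anick_apply]
    simp only [w, xx, yy, Fp, corr, aeval_X, der_X_s14, map_sub]
    rw [if_true, zero_add, zero_add, add_comm (Finsupp.single i1 1)]
  · rw [anick_apply]
    simp only [w, xx, yy, Fp, corr, aeval_X, der_X_s14, map_sub]
    rw [if_neg (by decide : ¬((1 : Fin 2) = 0)), zero_add, zero_add,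
      add_comm (Finsupp.single i2 1)]
  · rw [anick_symm_apply]
    simp only [w, xx, yy, Fm, corr, aeval_X, der_X_s14, map_sub]
    rw [if_true, zero_add, zero_add, add_comm (Finsupp.single i1 1)]
  · rw [anick_symm_apply]
    simp only [w, xx, yy, Fm, corr, aeval_X, der_X_s14, map_sub]
    rw [if_neg (by decide : ¬((1 : Fin 2) = 0)), zero_add, zero_add,
      add_comm (Finsupp.single i2 1)]
end
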